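/- If S is an uncountable subset of a tree T of height ω₁ that is ω₁-compact in the subspace topology and avoids a club set of levels of its downward closure S↓, then a contradiction arises; equivalently, S intersects a stationary set of levels of S↓. -/

import Mathlib

open Set Topology Cardinal Ordinal

universe u v

/-- The order (interval) topology of a tree. -/
def treeTopology (T : Type u) [PartialOrder T] : TopologicalSpace T :=
  TopologicalSpace.generateFrom
    ({s | ∃ a b : T, a < b ∧ s = Set.Ioc a b} ∪
     {s | ∃ b : T, (∀ a : T, ¬a < b) ∧ s = {b}})

/-- A tree order: the predecessors of every element are well-ordered. -/
def IsTreeOrder (T : Type u) [PartialOrder T] : Prop :=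
  ∀ x : T, IsWellOrder {y : T // y < x} (· < ·)

/-- The height of an element: the order type of its set of predecessors. -/
noncomputable def treeHeight {T : Type u} [PartialOrder T] (hT : IsTreeOrder T) (x : T) :
    Ordinal.{u} :=
  @Ordinal.type {y : T // y < x} (· < ·) (hT x)

/-- Hausdorff tree: elements at limit levels are determined by their predecessors. -/
def IsHausdorffTree (T : Type u) [PartialOrder T] : Prop :=
  ∀ x y : T, Set.Iio x = Set.Iio y → (Set.Iio x).Nonempty →
    (∀ z ∈ Set.Iio x, ∃ w ∈ Set.Iio x, z < w) → x = y

/-- The tree has height ω₁. -/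
def HasHeightOmega1 {T : Type u} [PartialOrder T] (hT : IsTreeOrder T) : Prop :=
  (∀ x : T, treeHeight hT x < ω₁) ∧ ∀ α < ω₁, ∃ x : T, treeHeight hT x = α

/-- Downward closure of a subset of a tree. -/
def downClosure {T : Type u} [PartialOrder T] (S : Set T) : Set T := {x | ∃ y ∈ S, x ≤ y}

/-- `D` is a closed discrete subset of the subspace `S`. -/
def ClosedDiscreteIn {T : Type u} [TopologicalSpace T] (D S : Set T) : Prop :=
  D ⊆ S ∧ closure D ∩ S ⊆ D ∧ ∀ x ∈ D, ∃ U : Set T, IsOpen U ∧ x ∈ U ∧ U ∩ D = {x}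

/-- `S` is ω₁-compact in the subspace topology: every closed discrete subset is countable. -/
def OmegaOneCompactIn {T : Type u} [TopologicalSpace T] (S : Set T) : Prop :=
  ∀ D : Set T, ClosedDiscreteIn D S → D.Countable

/-- A club (closed unbounded) subset of `ω₁` (as a set of ordinals, with the order topology). -/
def IsClubBelowOmega1 (C : Set Ordinal.{u}) : Prop :=
  C ⊆ Set.Iio ω₁ ∧ (∀ α < ω₁, ∃ β ∈ C, α ≤ β) ∧ ∀ α < ω₁, α ∈ closure C → α ∈ C

/-- A stationary subset of `ω₁`. -/
def IsStationaryBelowOmega1 (S : Set Ordinal.{u}) : Prop :=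
  S ⊆ Set.Iio ω₁ ∧ ∀ C : Set Ordinal.{u}, IsClubBelowOmega1 C → (S ∩ C).Nonempty

section Aux
variable {T : Type u} [PartialOrder T] (hT : IsTreeOrder T)

lemma treeHeight_eq_typein {x y : T} (h : y < x) :
    treeHeight hT y = @Ordinal.typein {z : T // z < x} (· < ·) (hT x) ⟨y, h⟩ := by
  haveI := hT x
  haveI := hT y
  rw [← @Ordinal.type_subrel {z : T // z < x} (· < ·) _ ⟨y, h⟩]
  refine Ordinal.type_eq.2 ⟨?_⟩
  refine RelIso.mk (Equiv.mk
    (fun z => ⟨⟨z.1, z.2.trans h⟩, z.2⟩)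
    (fun w => ⟨w.1.1, w.2⟩)
    (fun z => rfl) (fun w => by ext; rfl)) ?_
  intro a b
  exact Iff.rfl

lemma treeHeight_lt_of_lt {x y : T} (h : y < x) : treeHeight hT y < treeHeight hT x := by
  rw [treeHeight_eq_typein hT h]
  exact @Ordinal.typein_lt_type _ (· < ·) (hT x) ⟨y, h⟩

lemma exists_pred_at_level {x : T} {δ : Ordinal.{u}} (h : δ < treeHeight hT x) :
    ∃ a : T, a < x ∧ treeHeight hT a = δ := by
  haveI := hT x
  obtain ⟨a, ha⟩ := @Ordinal.typein_surj {z : T // z < x} (· < ·) _ _ h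
  exact ⟨a.1, a.2, by rw [treeHeight_eq_typein hT a.2]; simpa using ha⟩

lemma eq_of_le_of_treeHeight_eq {x y : T} (h : y ≤ x)
    (he : treeHeight hT y = treeHeight hT x) : y = x := by
  rcases h.lt_or_eq with h' | h'
  · exact absurd he (treeHeight_lt_of_lt hT h').ne
  · exact h'

lemma treeHeight_le_of_le {x y : T} (h : y ≤ x) : treeHeight hT y ≤ treeHeight hT x := by
  rcases h.lt_or_eq with h' | h'
  · exact (treeHeight_lt_of_lt hT h').le
  · rw [h']

lemma minimal_of_treeHeight_eq_zero {x : T} (h : treeHeight hT x = 0) : ∀ a : T, ¬a < x := by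
  haveI := hT x
  have := Ordinal.type_eq_zero_iff_isEmpty.1 h
  exact fun a ha => this.elim ⟨a, ha⟩

lemma isOpen_Ioc_tree {a x : T} (h : a < x) :
    IsOpen[treeTopology T] (Set.Ioc a x) :=
  TopologicalSpace.isOpen_generateFrom_of_mem (Or.inl ⟨a, x, h, rfl⟩)

lemma isOpen_singleton_tree {x : T} (h : ∀ a : T, ¬a < x) :
    IsOpen[treeTopology T] {x} :=
  TopologicalSpace.isOpen_generateFrom_of_mem (Or.inr ⟨x, h, rfl⟩)

/-- the supremum of the club points strictly below the height of `x`. -/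
noncomputable def glev (hT : IsTreeOrder T) (C : Set Ordinal.{u}) (x : T) : Ordinal.{u} :=
  sSup (C ∩ Set.Iio (treeHeight hT x))

end Aux

theorem stationary_levels_of_omegaOneCompact {T : Type u} [PartialOrder T]
    [tT : TopologicalSpace T] (htop : tT = treeTopology T)
    (hT : IsTreeOrder T) (hH : IsHausdorffTree T) (hht : HasHeightOmega1 hT)
    (S : Set T) (hSu : ¬S.Countable) (hSc : OmegaOneCompactIn S) :
    IsStationaryBelowOmega1 {α : Ordinal.{u} | ∃ x ∈ S, treeHeight hT x = α} := by
  subst htop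
  letI : TopologicalSpace T := treeTopology T
  constructor
  · rintro α ⟨x, hx, rfl⟩
    exact hht.1 x
  intro C hC
  obtain ⟨hCsub, hCunb, hCcl⟩ := hC
  by_contra hempty
  rw [Set.not_nonempty_iff_eq_empty] at hempty
  have hnotC : ∀ x ∈ S, treeHeight hT x ∉ C := by
    intro x hx hc
    have hmem : treeHeight hT x ∈ {α : Ordinal.{u} | ∃ x ∈ S, treeHeight hT x = α} ∩ C :=
      ⟨⟨x, hx, rfl⟩, hc⟩
    rw [hempty] at hmem
    exact hmem
  by_cases hlev : ∀ α : Ordinal.{u}, {x | x ∈ S ∧ treeHeight hT x = α}.Countable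
  · -- Case B : every level of S is countable
    have hbdd : ∀ x : T, BddAbove (C ∩ Set.Iio (treeHeight hT x)) :=
      fun x => ⟨treeHeight hT x, fun β hβ => hβ.2.le⟩
    have hgle : ∀ x : T, glev hT C x ≤ treeHeight hT x :=
      fun x => csSup_le' (fun β hβ => hβ.2.le)
    have hmemle : ∀ x : T, ∀ β ∈ C, β < treeHeight hT x → β ≤ glev hT C x :=
      fun x β hβ hlt => le_csSup (hbdd x) ⟨hβ, hlt⟩
    have hglt : ∀ x ∈ S, 0 < treeHeight hT x → glev hT C x < treeHeight hT x := by
      intro x hxS hpos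
      rcases (C ∩ Set.Iio (treeHeight hT x)).eq_empty_or_nonempty with he | hne
      · unfold glev
        rw [he, csSup_empty]
        exact hpos
      · rcases lt_or_eq_of_le (hgle x) with h | h
        · exact h
        · exfalso
          have hcl : treeHeight hT x ∈ closure C := by
            rw [← h]
            exact closure_mono Set.inter_subset_left (csSup_mem_closure hne (hbdd x))
          exact hnotC x hxS (hCcl _ (hht.1 x) hcl)
    have hgeq : ∀ {x d : T}, d ≤ x → glev hT C x < treeHeight hT d →
        glev hT C d = glev hT C x := by
      intro x d hdx hgd
      have hset : C ∩ Set.Iio (treeHeight hT d) = C ∩ Set.Iio (treeHeight hT x) := by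
        apply Set.eq_of_subset_of_subset
        · exact Set.inter_subset_inter_right _
            (Set.Iio_subset_Iio (treeHeight_le_of_le hT hdx))
        · rintro β ⟨hβC, hβlt⟩
          exact ⟨hβC, lt_of_le_of_lt (hmemle x β hβC hβlt) hgd⟩
      unfold glev
      rw [hset]
    -- D : first points of S on each branch after the last club level below them
    set D : Set T :=
      {x | x ∈ S ∧ ∀ y ∈ S, y < x → treeHeight hT y ≤ glev hT C x} with hDdef
    have hkey : ∀ x ∈ S, ∃ d ∈ D, glev hT C d = glev hT C x := by
      intro x hxS
      by_cases h0 : treeHeight hT x = 0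
      · exact ⟨x, ⟨hxS, fun y hy hyx =>
          absurd hyx (minimal_of_treeHeight_eq_zero hT h0 y)⟩, rfl⟩
      · have hpos9 : 0 < treeHeight hT x := pos_iff_ne_zero.2 h0
        have hgx := hglt x hxS hpos9
        set Q : Set Ordinal.{u} :=
          {o | ∃ y, (y ∈ S ∧ y ≤ x ∧ glev hT C x < treeHeight hT y) ∧ treeHeight hT y = o}
          with hQdef
        have hQne : Q.Nonempty := ⟨treeHeight hT x, ⟨x, ⟨hxS, le_refl x, hgx⟩, rfl⟩⟩
        obtain ⟨d, hdP, hdeq⟩ := Ordinal.lt_wf.min_mem Q hQne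
        have hgd : glev hT C d = glev hT C x := hgeq hdP.2.1 hdP.2.2
        refine ⟨d, ⟨hdP.1, ?_⟩, hgd⟩
        intro y hyS hyd
        by_contra hle
        push_neg at hle
        rw [hgd] at hle
        have hymem : treeHeight hT y ∈ Q := ⟨y, ⟨hyS, hyd.le.trans hdP.2.1, hle⟩, rfl⟩
        exact Ordinal.lt_wf.not_lt_min Q hymem (hdeq ▸ treeHeight_lt_of_lt hT hyd)
      -- D is closed discrete in S
    have hDcd : ClosedDiscreteIn D S := by
      refine ⟨fun x hx => hx.1, ?_, ?_⟩
      · rintro x ⟨hxc, hxS⟩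
        by_contra hxD
        have hex : ∃ y, y ∈ S ∧ y < x ∧ glev hT C x < treeHeight hT y := by
          by_contra hno
          push_neg at hno
          exact hxD ⟨hxS, fun y hy hyx => hno y hy hyx⟩
        obtain ⟨y, hyS, hyx, hy⟩ := hex
        obtain ⟨d, hdU, hdD⟩ := mem_closure_iff.1 hxc _ (isOpen_Ioc_tree hyx) ⟨hyx, le_refl x⟩
        rcases hdU.2.lt_or_eq with hdx | hdx
        · have h1 : treeHeight hT y ≤ glev hT C d := hdD.2 y hyS hdU.1
          have h2 : glev hT C d ≤ glev hT C x :=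
            csSup_le' (fun β hβ => hmemle x β hβ.1 (hβ.2.trans (treeHeight_lt_of_lt hT hdx)))
          exact absurd hy (h1.trans h2).not_gt
        · rw [hdx] at hdD
          exact hxD hdD
      · rintro x ⟨hxS, hxmin⟩
        by_cases h0 : treeHeight hT x = 0
        · refine ⟨{x}, isOpen_singleton_tree (minimal_of_treeHeight_eq_zero hT h0), rfl, ?_⟩
          ext y
          constructor
          · rintro ⟨hy, -⟩
            exact hy
          · rintro rfl
            exact ⟨rfl, hxS, hxmin⟩
        · have hpos : 0 < treeHeight hT x := pos_iff_ne_zero.2 h0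
          obtain ⟨a, hax, haht⟩ := exists_pred_at_level hT (hglt x hxS hpos)
          refine ⟨Set.Ioc a x, isOpen_Ioc_tree hax, ⟨hax, le_refl x⟩, ?_⟩
          ext y
          constructor
          · rintro ⟨⟨hay, hyx⟩, hyS, hymin⟩
            rcases hyx.lt_or_eq with h | h
            · exfalso
              have h1 : treeHeight hT y ≤ glev hT C x := hxmin y hyS h
              have h2 : treeHeight hT a < treeHeight hT y := treeHeight_lt_of_lt hT hay
              rw [haht] at h2
              exact absurd h1 h2.not_ge
            · exact h
          · rintro rfl
            exact ⟨⟨hax, le_refl _⟩, hxS, hxmin⟩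
    have hDc : D.Countable := hSc D hDcd
    have hfib : ∀ δ : Ordinal.{u}, δ < ω₁ → {x | x ∈ S ∧ glev hT C x = δ}.Countable := by
      intro δ hδ
      obtain ⟨β, hβC, hβge⟩ := hCunb (Order.succ δ) ((isSuccLimit_omega 1).succ_lt hδ)
      have hδβ : δ < β := Order.succ_le_iff.1 hβge
      have hβω : β < ω₁ := hCsub hβC
      have hIio : (Set.Iio β).Countable := by
        refine Cardinal.le_aleph0_iff_set_countable.1 ?_
        rw [Ordinal.mk_Iio_ordinal]
        have hcard : β.card ≤ ℵ₀ := by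
          have h1 : β.card < ℵ₁ := Cardinal.lt_ord.1 (by rw [ord_aleph]; exact hβω)
          rwa [← Cardinal.succ_aleph0, Order.lt_succ_iff] at h1
        calc Cardinal.lift.{u + 1} β.card ≤ Cardinal.lift.{u + 1} ℵ₀ := Cardinal.lift_le.2 hcard
          _ = ℵ₀ := Cardinal.lift_aleph0
      have hsub : {x | x ∈ S ∧ glev hT C x = δ} ⊆
          ⋃ α ∈ Set.Iio β, {x | x ∈ S ∧ treeHeight hT x = α} := by
        rintro x ⟨hxS, hgx⟩
        have hlt : treeHeight hT x < β := by
          rcases lt_trichotomy (treeHeight hT x) β with h | h | h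
          · exact h
          · exact absurd (h ▸ hβC) (hnotC x hxS)
          · exfalso
            have := hmemle x β hβC h
            rw [hgx] at this
            exact absurd hδβ this.not_gt
        exact Set.mem_biUnion hlt ⟨hxS, rfl⟩
      exact Set.Countable.mono hsub (hIio.biUnion (fun α _ => hlev α))
    have hScnt : S.Countable := by
      have hsub : S ⊆ ⋃ d ∈ D, {x | x ∈ S ∧ glev hT C x = glev hT C d} := by
        intro x hx
        obtain ⟨d, hdD, hgd⟩ := hkey x hx
        exact Set.mem_biUnion hdD ⟨hx, hgd.symm⟩
      exact Set.Countable.mono hsub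
        (hDc.biUnion (fun d _ => hfib _ (lt_of_le_of_lt (hgle d) (hht.1 d))))
    exact hSu hScnt
  · -- Case A : some level of S is uncountable; it is closed discrete in S
    push_neg at hlev
    obtain ⟨α, hα⟩ := hlev
    refine hα (hSc _ ⟨fun x hx => hx.1, ?_, ?_⟩)
    · rintro x ⟨hxc, hxS⟩
      rcases lt_trichotomy (treeHeight hT x) α with hlt | heq | hgt
      · by_cases h0 : treeHeight hT x = 0
        · obtain ⟨y, hyU, hyA⟩ := mem_closure_iff.1 hxc _
            (isOpen_singleton_tree (minimal_of_treeHeight_eq_zero hT h0)) rfl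
          rw [Set.mem_singleton_iff] at hyU
          subst hyU
          exact absurd hyA.2 hlt.ne
        · have hpos : 0 < treeHeight hT x := pos_iff_ne_zero.2 h0
          obtain ⟨a, hax, -⟩ := exists_pred_at_level hT hpos
          obtain ⟨y, hyU, hyA⟩ := mem_closure_iff.1 hxc _ (isOpen_Ioc_tree hax)
            ⟨hax, le_refl x⟩
          have hle : treeHeight hT y ≤ treeHeight hT x := treeHeight_le_of_le hT hyU.2
          rw [hyA.2] at hle
          exact absurd hlt hle.not_gt
      · exact ⟨hxS, heq⟩
      · obtain ⟨a, hax, haα⟩ := exists_pred_at_level hT hgt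
        obtain ⟨y, hyU, hyA⟩ := mem_closure_iff.1 hxc _ (isOpen_Ioc_tree hax)
          ⟨hax, le_refl x⟩
        have h1 : treeHeight hT a < treeHeight hT y := treeHeight_lt_of_lt hT hyU.1
        rw [haα, hyA.2] at h1
        exact absurd h1 (lt_irrefl α)
    · rintro x ⟨hxS, hxα⟩
      by_cases h0 : treeHeight hT x = 0
      · refine ⟨{x}, isOpen_singleton_tree (minimal_of_treeHeight_eq_zero hT h0), rfl, ?_⟩
        ext y
        constructor
        · rintro ⟨hy, -⟩
          exact hy
        · rintro rfl
          exact ⟨rfl, hxS, hxα⟩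
      · have hpos : 0 < treeHeight hT x := pos_iff_ne_zero.2 h0
        obtain ⟨a, hax, -⟩ := exists_pred_at_level hT hpos
        refine ⟨Set.Ioc a x, isOpen_Ioc_tree hax, ⟨hax, le_refl x⟩, ?_⟩
        ext y
        constructor
        · rintro ⟨⟨-, hyx⟩, -, hyα⟩
          exact eq_of_le_of_treeHeight_eq hT hyx (hyα.trans hxα.symm)
        · rintro rfl
          exact ⟨⟨hax, le_refl _⟩, hxS, hxα⟩
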